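/- Let T = ⟨α⟩ + βS be a monoscopic gluing of S = ⟨m, n_2, ..., n_k⟩ with α ∈ Ap(S;m). For a, a' ∈ Ap(S;m) and 0 ≤ b, b' ≤ β−1, one has (b'α + a'β) − (bα + aβ) ∈ T if and only if a' − a ∈ S and either b ≤ b' or a' − a − α ∈ S. -/

import Mathlib

/-- The Apéry set `Ap(S; m) = {n ∈ S : n - m ∉ S}`. -/
def apSet (S : Set ℤ) (m : ℤ) : Set ℤ := {n | n ∈ S ∧ n - m ∉ S}

theorem stmt_9 (G : Finset ℤ) (m : ℤ) (hm : m ∈ G) (hpos : ∀ g ∈ G, 0 < g)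
    (S : Set ℤ) (hS : S = (AddSubmonoid.closure (G : Set ℤ) : Set ℤ))
    (hcof : {n : ℤ | 0 ≤ n ∧ n ∉ S}.Finite)
    (β : ℤ) (hβ : 2 ≤ β) (α : ℤ) (hα : α ∈ S) (hαgen : α ∉ G)
    (hgcd : Int.gcd α β = 1)
    (T : Set ℤ)
    (hT : T = (AddSubmonoid.closure (insert α ((fun g => β * g) '' (G : Set ℤ))) : Set ℤ))
    (hαap : α ∈ apSet S m)
    (x x' b b' : ℤ) (hx : x ∈ apSet S m) (hx' : x' ∈ apSet S m)
    (hb0 : 0 ≤ b) (hb1 : b ≤ β - 1) (hb0' : 0 ≤ b') (hb1' : b' ≤ β - 1) :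
    (b' * α + x' * β) - (b * α + x * β) ∈ T ↔ (x' - x ∈ S ∧ (b ≤ b' ∨ x' - x - α ∈ S)) := by
  subst hS hT
  set A := AddSubmonoid.closure (G : Set ℤ) with hA
  set B := AddSubmonoid.closure (insert α ((fun g => β * g) '' (G : Set ℤ))) with hB
  have hαA : α ∈ A := hα
  have hαB : α ∈ B := AddSubmonoid.subset_closure (Set.mem_insert _ _)
  have hβpos : (0:ℤ) < β := by linarith
  have hβS : ∀ s : ℤ, s ∈ A → β * s ∈ B := by
    intro s hs
    induction hs using AddSubmonoid.closure_induction with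
    | mem g hg => exact AddSubmonoid.subset_closure (Or.inr ⟨g, hg, rfl⟩)
    | zero => simpa using (zero_mem B)
    | add a c _ _ ha hc => rw [mul_add]; exact add_mem ha hc
  have hBmem : ∀ d : ℤ, d ∈ B → ∃ (c : ℕ) (s : ℤ), s ∈ A ∧ d = (c : ℤ) * α + β * s := by
    intro d hd
    induction hd using AddSubmonoid.closure_induction with
    | mem g hg =>
      rcases hg with rfl | ⟨g', hg', rfl⟩
      · exact ⟨1, 0, zero_mem A, by ring⟩
      · exact ⟨0, g', AddSubmonoid.subset_closure hg', by push_cast; ring⟩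
    | zero => exact ⟨0, 0, zero_mem A, by simp⟩
    | add a c _ _ ha hc =>
      obtain ⟨c1, s1, hs1, rfl⟩ := ha
      obtain ⟨c2, s2, hs2, rfl⟩ := hc
      exact ⟨c1 + c2, s1 + s2, add_mem hs1 hs2, by push_cast; ring⟩
  have hcop : IsCoprime β α := by
    rw [Int.isCoprime_iff_gcd_eq_one, Int.gcd_comm]; exact hgcd
  constructor
  · intro hd
    obtain ⟨c, s, hsA, heq⟩ := hBmem _ hd
    have hdvd : β ∣ (b' - b - (c:ℤ)) * α := ⟨s - x' + x, by linarith [heq]⟩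
    obtain ⟨t, ht⟩ := hcop.dvd_of_dvd_mul_right hdvd
    have hxx : x' - x = s - t * α := by
      have h2 : β * (t * α) = β * (s - x' + x) := by linear_combination heq - α * ht
      have := mul_left_cancel₀ (ne_of_gt hβpos) h2
      linarith
    rcases le_or_gt t 0 with htle | htpos
    · rcases eq_or_lt_of_le htle with rfl | htneg
      · refine ⟨?_, Or.inl ?_⟩
        · rw [hxx]; simpa using hsA
        · have : b' - b = (c:ℤ) := by linarith [ht]
          have := Int.ofNat_nonneg c
          omega
      · refine ⟨?_, Or.inr ?_⟩
        · have : x' - x = s + (-t).toNat • α := by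
            rw [nsmul_eq_mul]
            have : ((-t).toNat : ℤ) = -t := Int.toNat_of_nonneg (by omega)
            rw [this]; linarith [hxx]
          rw [this]; exact add_mem hsA (nsmul_mem hαA _)
        · have : x' - x - α = s + (-t-1).toNat • α := by
            rw [nsmul_eq_mul]
            have : ((-t-1).toNat : ℤ) = -t-1 := Int.toNat_of_nonneg (by omega)
            rw [this]; linarith [hxx]
          rw [this]; exact add_mem hsA (nsmul_mem hαA _)
    · exfalso
      have hc0 : (0:ℤ) ≤ c := Int.ofNat_nonneg c
      have : β * t ≥ β := by nlinarith
      omega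
  · rintro ⟨hsx, hor | hor⟩
    · have key : (b' * α + x' * β) - (b * α + x * β)
          = (b' - b).toNat • α + β * (x' - x) := by
        rw [nsmul_eq_mul]
        have : ((b' - b).toNat : ℤ) = b' - b := Int.toNat_of_nonneg (by omega)
        rw [this]; ring
      rw [key]; exact add_mem (nsmul_mem hαB _) (hβS _ hsx)
    · have key : (b' * α + x' * β) - (b * α + x * β)
          = (b' - b + β).toNat • α + β * (x' - x - α) := by
        rw [nsmul_eq_mul]
        have : ((b' - b + β).toNat : ℤ) = b' - b + β := Int.toNat_of_nonneg (by omega)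
        rw [this]; ring
      rw [key]; exact add_mem (nsmul_mem hαB _) (hβS _ hor)
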